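/- arXiv:math/0610252 — 5 statements merged into one kernel-verified Lean document; each statement's English description precedes it below -/
import Mathlib

section
/- The set of smooth functions C^∞(M, Y) is dense in the space C(M, Y) of continuous functions from M to Y endowed with the compact-open topology. -/
open Set Function
open scoped Manifold

/-- Smooth functions are dense in the continuous functions `C(M, Y)` with the
compact-open topology. -/
theorem smooth_dense_in_continuous_compactOpen
    {EB : Type*} [NormedAddCommGroup EB] [NormedSpace ℝ EB] [FiniteDimensional ℝ EB]
    {HB : Type*} [TopologicalSpace HB] {IB : ModelWithCorners ℝ EB HB}
    {M : Type*} [TopologicalSpace M] [ChartedSpace HB M] [IsManifold IB (⊤ : ℕ∞) M]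
    [SigmaCompactSpace M] [SecondCountableTopology M] [T2Space M]
    {Y : Type*} [NormedAddCommGroup Y] [NormedSpace ℝ Y]
 :
    Dense {f : C(M, Y) | ContMDiff IB 𝓘(ℝ, Y) (⊤ : ℕ∞) (f : M → Y)} := by
  rw [dense_iff_closure_eq, Set.eq_univ_iff_forall]
  intro f
  -- For each `n`, construct a smooth `1/(n+1)`-approximation of `f`.
  have key : ∀ n : ℕ, ∃ g : ContMDiffMap IB 𝓘(ℝ, Y) M Y (⊤ : ℕ∞),
      ∀ x, g x ∈ Metric.ball (f x) (1 / (n + 1)) := by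
    intro n
    apply exists_contMDiffMap_forall_mem_convex_of_local_const IB
      (t := fun x => Metric.ball (f x) (1 / (n + 1)))
      (fun x => convex_ball _ _)
    intro x
    refine ⟨f x, ?_⟩
    have hpos : (0 : ℝ) < 1 / (n + 1) := by positivity
    have := f.continuous.continuousAt (x := x)
      (Metric.ball_mem_nhds (f x) hpos)
    filter_upwards [this] with y hy
    rw [Metric.mem_ball, dist_comm]
    exact hy
  choose g hg using key
  -- The sequence `g n` tends to `f` uniformly, hence in the compact-open topology.
  have htends : Filter.Tendsto (fun n => ((g n : C(M, Y)))) Filter.atTop (nhds f) := by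
    rw [ContinuousMap.tendsto_iff_forall_isCompact_tendstoUniformlyOn]
    intro K _
    rw [Metric.tendstoUniformlyOn_iff]
    intro ε hε
    obtain ⟨N, hN⟩ := exists_nat_one_div_lt hε
    filter_upwards [Filter.eventually_ge_atTop N] with n hn x _
    show dist (f x) ((g n) x) < ε
    have h1 : dist (f x) (g n x) < 1 / (n + 1) := by
      have := hg n x
      rw [Metric.mem_ball, dist_comm] at this
      exact this
    have h2 : (1 : ℝ) / (n + 1) ≤ 1 / (N + 1) := by
      apply one_div_le_one_div_of_le <;> [positivity; exact_mod_cast by omega]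
    linarith
  exact mem_closure_of_tendsto htends
    (Filter.Eventually.of_forall fun n => (g n).contMDiff)
end

section
/- Let f : M → Y be a continuous function with compact support and let U ⊆ M be an open neighbourhood of supp(f). Then every neighbourhood of f in C(M, Y) with the compact-open topology contains a smooth function g : M → Y whose support is contained in U. -/
open Set Function
open scoped Manifold

/-- A compactly supported continuous function can be approximated, in the compact-open
topology, by smooth functions supported in any given open neighbourhood of its support. -/
theorem smooth_approx_compactSupport
    {EB : Type*} [NormedAddCommGroup EB] [NormedSpace ℝ EB] [FiniteDimensional ℝ EB]
    {HB : Type*} [TopologicalSpace HB] {IB : ModelWithCorners ℝ EB HB}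
    {M : Type*} [TopologicalSpace M] [ChartedSpace HB M] [IsManifold IB (⊤ : ℕ∞) M]
    [SigmaCompactSpace M] [SecondCountableTopology M] [T2Space M]
    {Y : Type*} [NormedAddCommGroup Y] [NormedSpace ℝ Y]
    (f : C(M, Y)) (hf : HasCompactSupport (f : M → Y))
    {U : Set M} (hU : IsOpen U) (hsupp : tsupport (f : M → Y) ⊆ U) :
    ∀ W ∈ nhds f, ∃ g : C(M, Y), g ∈ W ∧
      ContMDiff IB 𝓘(ℝ, Y) (⊤ : ℕ∞) (g : M → Y) ∧ tsupport (g : M → Y) ⊆ U := by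
  intro W hW
  haveI : LocallyCompactSpace M := Manifold.locallyCompact_of_finiteDimensional IB
  -- extract a basic neighbourhood: compact K, ε > 0
  have hbasis := (Metric.uniformity_basis_dist (α := Y)).compactConvergenceUniformity
    (α := M)
  obtain ⟨⟨K, ε⟩, ⟨hK, hε⟩, hKW⟩ := (nhds_basis_uniformity' hbasis).mem_iff.1 hW
  -- compact L sandwiched between tsupport f and U
  obtain ⟨L, hLc, hL1, hL2⟩ := exists_compact_between hf hU hsupp
  -- smooth cutoff χ : 0 outside interior L, 1 on tsupport f
  obtain ⟨χ, hχ0, hχ1, hχ01⟩ := exists_contMDiffMap_zero_one_of_isClosed IB (n := (⊤ : ℕ∞))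
    (isOpen_interior (s := L)).isClosed_compl (isClosed_tsupport (f : M → Y))
    (disjoint_compl_left_iff_subset.2 hL1)
  -- smooth approximation h with dist (h x) (f x) < ε everywhere
  obtain ⟨h, hh⟩ := exists_contMDiffMap_forall_mem_convex_of_local_const IB (n := (⊤ : ℕ∞))
    (t := fun x => Metric.ball (f x) ε) (fun x => convex_ball _ _)
    (fun x => ⟨f x, (f.continuous.tendsto x).eventually
      (Metric.ball_mem_nhds _ hε) |>.mono fun y hy => by
        simpa [Metric.mem_ball, dist_comm] using hy⟩)
  -- the candidate g = χ • h
  have hgsm : ContMDiff IB 𝓘(ℝ, Y) (⊤ : ℕ∞) (fun x => χ x • h x) :=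
    ContMDiff.smul χ.contMDiff h.contMDiff
  refine ⟨⟨fun x => χ x • h x, hgsm.continuous⟩, ?_, hgsm, ?_⟩
  · apply hKW
    intro x hx
    simp only [ContinuousMap.coe_mk]
    by_cases hxs : x ∈ tsupport (f : M → Y)
    · rw [hχ1 hxs, Pi.one_apply, one_smul]
      simpa [dist_comm] using hh x
    · have hfx : f x = 0 := image_eq_zero_of_notMem_tsupport hxs
      show dist (f x) (χ x • h x) < ε
      have hd : dist (h x) (f x) < ε := by simpa [dist_comm] using hh x
      rw [hfx]
      calc dist (0 : Y) (χ x • h x) = ‖χ x‖ * ‖h x‖ := by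
            rw [dist_comm, dist_zero_right, norm_smul]
        _ ≤ 1 * ‖h x‖ := by
            apply mul_le_mul_of_nonneg_right _ (norm_nonneg _)
            rw [Real.norm_eq_abs, abs_le]
            exact ⟨by linarith [(hχ01 x).1], (hχ01 x).2⟩
        _ = ‖h x‖ := one_mul _
        _ < ε := by simpa [hfx, dist_eq_norm] using hd
  · have hsub : tsupport (fun x => χ x • h x : M → Y) ⊆ tsupport (χ : M → ℝ) := by
      apply closure_mono
      intro x hx
      simp only [mem_support] at hx ⊢
      intro hχx
      exact hx (by rw [hχx, zero_smul])
    refine hsub.trans ?_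
    have : support (χ : M → ℝ) ⊆ interior L := by
      intro x hx
      by_contra hxL
      exact hx (hχ0 hxL)
    calc tsupport (χ : M → ℝ) ⊆ closure (interior L) := closure_mono this
      _ ⊆ L := closure_minimal interior_subset hLc.isClosed
      _ ⊆ U := hL2
end

section
/- Let W ⊆ Y be an open convex subset, let f : M → W be continuous, let L ⊆ M be closed and U ⊆ M be open such that f is smooth on an open neighbourhood of L \ U. Then every neighbourhood of f in C(M, W) with the compact-open topology contains a continuous map g : M → W which is smooth on an open neighbourhood of L and which equals f on M \ U. -/
open Set Function
open scoped Manifold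

/-- Relative smoothing for maps into an open convex subset `W` of a normed space:
any neighbourhood of `f` in `C(M, W)` (compact-open topology) contains a map that is smooth
on a neighbourhood of `L` and agrees with `f` off `U`. -/
theorem smooth_relative_approx_convex
    {EB : Type*} [NormedAddCommGroup EB] [NormedSpace ℝ EB] [FiniteDimensional ℝ EB]
    {HB : Type*} [TopologicalSpace HB] {IB : ModelWithCorners ℝ EB HB}
    {M : Type*} [TopologicalSpace M] [ChartedSpace HB M] [IsManifold IB (⊤ : ℕ∞) M]
    [SigmaCompactSpace M] [SecondCountableTopology M] [T2Space M]
    {Y : Type*} [NormedAddCommGroup Y] [NormedSpace ℝ Y]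
    {W : Set Y} (hWopen : IsOpen W) (hWconv : Convex ℝ W)
    (f : C(M, W))
    {L : Set M} (hL : IsClosed L) {U : Set M} (hU : IsOpen U)
    (hfsm : ∃ A : Set M, IsOpen A ∧ L \ U ⊆ A ∧
      ContMDiffOn IB 𝓘(ℝ, Y) (⊤ : ℕ∞) (fun x => (f x : Y)) A) :
    ∀ Nf ∈ nhds f, ∃ g : C(M, W), g ∈ Nf ∧
      (∃ V : Set M, IsOpen V ∧ L ⊆ V ∧ ContMDiffOn IB 𝓘(ℝ, Y) (⊤ : ℕ∞) (fun x => (g x : Y)) V) ∧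
      (∀ x, x ∉ U → g x = f x) := by
  intro Nf hNf
  obtain ⟨A, hAopen, hLUA, hfA⟩ := hfsm
  -- Extract a compact set K and ε > 0 controlling the neighbourhood Nf
  obtain ⟨⟨K, V⟩, ⟨hK, hV⟩, hKV⟩ :=
    ((nhds_basis_uniformity' ContinuousMap.hasBasis_compactConvergenceUniformity).mem_iff).1 hNf
  obtain ⟨ε, hε, hεV⟩ := Metric.mem_uniformity_dist.1 hV
  -- Smooth Urysohn function φ₀ : 0 on Uᶜ, 1 on L \ A
  have hdisj : Disjoint (Uᶜ) (L \ A) := by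
    rw [disjoint_compl_left_iff_subset]
    intro x hx
    by_cases hxU : x ∈ U
    · exact hxU
    · exact absurd (hLUA ⟨hx.1, hxU⟩) hx.2
  obtain ⟨φ₀, hφ₀0, hφ₀1, hφ₀mem⟩ :=
    exists_contMDiffMap_zero_one_of_isClosed (n := (⊤ : ℕ∞)) IB hU.isClosed_compl (hL.sdiff hAopen) hdisj
  -- Reparametrize: φ = smoothTransition (3 φ₀ - 1); φ = 1 on {φ₀ > 2/3} ⊇ L \ A, φ = 0 off U
  set φ : M → ℝ := fun x => Real.smoothTransition (3 * φ₀ x - 1) with hφdef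
  have hφsm : ContMDiff IB 𝓘(ℝ) (⊤ : ℕ∞) φ :=
    Real.smoothTransition.contDiff.contMDiff.comp
      (((contMDiff_const.mul φ₀.contMDiff).sub contMDiff_const))
  have hφ0 : ∀ x ∉ U, φ x = 0 := fun x hx => by
    have : φ₀ x = 0 := hφ₀0 hx
    simp [hφdef, this, Real.smoothTransition.zero_of_nonpos]
  have hφ1 : ∀ x, 2/3 < φ₀ x → φ x = 1 := fun x hx =>
    Real.smoothTransition.one_of_one_le (by linarith)
  have hφmem : ∀ x, φ x ∈ Icc (0:ℝ) 1 := fun x =>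
    ⟨Real.smoothTransition.nonneg _, Real.smoothTransition.le_one _⟩
  -- The open set O where φ = 1
  set O : Set M := {x | 2/3 < φ₀ x} with hOdef
  have hOopen : IsOpen O := isOpen_lt continuous_const φ₀.contMDiff.continuous
  have hLAO : L \ A ⊆ O := fun x hx => by
    have : φ₀ x = 1 := hφ₀1 hx
    simp [hOdef, this]; norm_num
  -- Smooth global function h with values in W, ε-close to f on K
  obtain ⟨h, hh⟩ := exists_contMDiffMap_forall_mem_convex_of_local (F := Y) (n := (⊤ : ℕ∞)) IB
    (t := fun x => {y : Y | y ∈ W ∧ (x ∈ K → dist y (f x : Y) < ε)})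
    (fun x => by
      show Convex ℝ {y : Y | y ∈ W ∧ (x ∈ K → dist y (f x : Y) < ε)}
      by_cases hxK : x ∈ K
      · have : {y : Y | y ∈ W ∧ (x ∈ K → dist y (f x : Y) < ε)}
            = W ∩ Metric.ball (f x : Y) ε := by
          ext y; simp [hxK, Metric.mem_ball]
        rw [this]; exact hWconv.inter (convex_ball _ _)
      · have : {y : Y | y ∈ W ∧ (x ∈ K → dist y (f x : Y) < ε)} = W := by
          ext y; simp [hxK]
        rw [this]; exact hWconv)
    (fun x₀ => by
      have hcont : Continuous fun x => ((f x : Y)) := continuous_subtype_val.comp f.continuous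
      have : ∀ᶠ x in nhds x₀, dist (f x₀ : Y) (f x : Y) < ε := by
        have := (hcont.tendsto x₀) (Metric.ball_mem_nhds (f x₀ : Y) hε)
        filter_upwards [this] with x hx
        rw [dist_comm]; exact hx
      refine ⟨{x | dist (f x₀ : Y) (f x : Y) < ε}, this, fun _ => (f x₀ : Y),
        contMDiffOn_const, fun y hy => ⟨(f x₀).2, fun _ => hy⟩⟩)
  have hhW : ∀ x, h x ∈ W := fun x => (hh x).1
  have hhK : ∀ x ∈ K, dist (h x) (f x : Y) < ε := fun x hx => (hh x).2 hx
  -- Define g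
  have hgmem : ∀ x : M, (1 - φ x) • (f x : Y) + φ x • h x ∈ W := fun x =>
    hWconv (f x).2 (hhW x) (by linarith [(hφmem x).2]) (hφmem x).1 (by ring)
  set gfun : M → Y := fun x => (1 - φ x) • (f x : Y) + φ x • h x with hgdef
  have hgcont : Continuous gfun := by
    have hcf : Continuous fun x => ((f x : Y)) := continuous_subtype_val.comp f.continuous
    exact ((continuous_const.sub hφsm.continuous).smul hcf).add
      (hφsm.continuous.smul (h.contMDiff.continuous))
  refine ⟨⟨fun x => ⟨gfun x, hgmem x⟩, hgcont.subtype_mk _⟩, ?_, ?_, ?_⟩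
  · -- g ∈ Nf
    apply hKV
    intro x hx
    apply hεV
    have : dist (f x : Y) (gfun x) = φ x * dist (h x) (f x : Y) := by
      rw [dist_eq_norm, dist_eq_norm]
      have : (f x : Y) - gfun x = φ x • ((f x : Y) - h x) := by
        simp only [hgdef, smul_sub, smul_smul]
        module
      rw [this, norm_smul, Real.norm_eq_abs, abs_of_nonneg (hφmem x).1, norm_sub_rev]
    show dist (f x) _ < ε
    rw [Subtype.dist_eq]
    simp only [ContinuousMap.coe_mk]
    rw [this]
    calc φ x * dist (h x) (f x : Y) ≤ 1 * dist (h x) (f x : Y) := by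
          apply mul_le_mul_of_nonneg_right (hφmem x).2 dist_nonneg
      _ < ε := by rw [one_mul]; exact hhK x hx
  · -- smooth on A ∪ O
    refine ⟨A ∪ O, hAopen.union hOopen, ?_, ?_⟩
    · intro x hx
      by_cases hxA : x ∈ A
      · exact Or.inl hxA
      · exact Or.inr (hLAO ⟨hx, hxA⟩)
    · intro x hx
      apply ContMDiffAt.contMDiffWithinAt
      rcases hx with hxA | hxO
      · have hfAt : ContMDiffAt IB 𝓘(ℝ, Y) (⊤ : ℕ∞) (fun x => (f x : Y)) x :=
          hfA.contMDiffAt (hAopen.mem_nhds hxA)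
        exact ((contMDiffAt_const.sub (hφsm x)).smul hfAt).add ((hφsm x).smul (h.contMDiff x))
      · have heq : ∀ᶠ y in nhds x, gfun y = h y := by
          filter_upwards [hOopen.mem_nhds hxO] with y hy
          simp [hgdef, hφ1 y hy]
        exact (h.contMDiff x).congr_of_eventuallyEq heq
  · -- equals f off U
    intro x hx
    apply Subtype.ext
    show gfun x = (f x : Y)
    simp [hgdef, hφ0 x hx]
end

section
/- Let W ⊆ N be an open subset which is diffeomorphic to an open convex subset of the modelling space of N, let f : M → W be continuous, let L ⊆ M be closed and U ⊆ M be open such that f is smooth on an open neighbourhood of L \ U. Then every neighbourhood of f in C(M, W) with the compact-open topology contains a continuous map g : M → W which is smooth on an open neighbourhood of L and which equals f on M \ U. -/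
open Set Function
open scoped Manifold

/-- Relative smoothing for maps into an open subset `W` of a manifold `N` that is
diffeomorphic to an open convex subset of the model space of `N`. -/
theorem smooth_relative_approx_convex_chart
    {EB : Type*} [NormedAddCommGroup EB] [NormedSpace ℝ EB] [FiniteDimensional ℝ EB]
    {HB : Type*} [TopologicalSpace HB] {IB : ModelWithCorners ℝ EB HB}
    {M : Type*} [TopologicalSpace M] [ChartedSpace HB M] [IsManifold IB (⊤ : ℕ∞) M]
    [SigmaCompactSpace M] [SecondCountableTopology M] [T2Space M]
    {EN : Type*} [NormedAddCommGroup EN] [NormedSpace ℝ EN]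
    {HN : Type*} [TopologicalSpace HN] {IN : ModelWithCorners ℝ EN HN}
    {N : Type*} [TopologicalSpace N] [ChartedSpace HN N] [IsManifold IN (⊤ : ℕ∞) N]
    {W : Set N} (hWopen : IsOpen W)
    (hdiffeo : ∃ C : Set EN, IsOpen C ∧ Convex ℝ C ∧
      ∃ (φ : N → EN) (ψ : EN → N),
        ContMDiffOn IN 𝓘(ℝ, EN) (⊤ : ℕ∞) φ W ∧ ContMDiffOn 𝓘(ℝ, EN) IN (⊤ : ℕ∞) ψ C ∧
        (∀ x ∈ W, φ x ∈ C) ∧ (∀ y ∈ C, ψ y ∈ W) ∧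
        (∀ x ∈ W, ψ (φ x) = x) ∧ (∀ y ∈ C, φ (ψ y) = y))
    (f : C(M, W))
    {L : Set M} (hL : IsClosed L) {U : Set M} (hU : IsOpen U)
    (hfsm : ∃ A : Set M, IsOpen A ∧ L \ U ⊆ A ∧
      ContMDiffOn IB IN (⊤ : ℕ∞) (fun x => (f x : N)) A) :
    ∀ Nf ∈ nhds f, ∃ g : C(M, W), g ∈ Nf ∧
      (∃ V : Set M, IsOpen V ∧ L ⊆ V ∧ ContMDiffOn IB IN (⊤ : ℕ∞) (fun x => (g x : N)) V) ∧
      (∀ x, x ∉ U → g x = f x) := by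
  obtain ⟨C, hCo, hCc, φ, ψ, hφ, hψ, hφC, hψW, hψφ, hφψ⟩ := hdiffeo
  obtain ⟨A, hAo, hLUA, hfA⟩ := hfsm
  -- the map `u = φ ∘ f : M → EN` with values in `C`
  set u : M → EN := fun x => φ (f x) with hu_def
  have hu_cont : Continuous u :=
    hφ.continuousOn.comp_continuous (continuous_subtype_val.comp f.continuous)
      fun x => (f x).2
  have huC : ∀ x, u x ∈ C := fun x => hφC _ (f x).2
  have huA : ContMDiffOn IB 𝓘(ℝ, EN) (⊤ : ℕ∞) u A := hφ.comp hfA fun x _ => (f x).2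
  -- choose an open set `O` with `L \ A ⊆ O ⊆ closure O ⊆ U`
  have hLA_closed : IsClosed (L \ A) := hL.sdiff hAo
  have hLAU : L \ A ⊆ U := by
    intro x hx
    by_contra hxU
    exact hx.2 (hLUA ⟨hx.1, hxU⟩)
  obtain ⟨O, hOo, hLAO, hOU⟩ : ∃ O : Set M, IsOpen O ∧ L \ A ⊆ O ∧ closure O ⊆ U := by
    haveI := IB.locallyCompactSpace
    haveI := ChartedSpace.locallyCompactSpace HB M
    exact normal_exists_closure_subset hLA_closed hU hLAU
  -- a smooth cut-off function `χ`, `0` outside `U`, `1` on `closure O`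
  obtain ⟨χ, hχ0, hχ1, hχ01⟩ :=
    exists_contMDiffMap_zero_one_of_isClosed IB (n := (⊤ : ℕ∞)) hU.isClosed_compl isClosed_closure
      (Set.disjoint_left.mpr fun x hxU hxO => hxU (hOU hxO))
  -- smooth approximations of `u` with values in `C`
  have Hh : ∀ n : ℕ, ∃ h : M → EN, ContMDiff IB 𝓘(ℝ, EN) (⊤ : ℕ∞) h ∧
      ∀ x, h x ∈ Metric.ball (u x) ((1 : ℝ) / (n + 1)) ∩ C := by
    intro n
    have hr : (0 : ℝ) < 1 / (n + 1) := by positivity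
    have Hloc : ∀ x₀ : M, ∃ s ∈ nhds x₀, ∃ g : M → EN, ContMDiffOn IB 𝓘(ℝ, EN) (⊤ : ℕ∞) g s ∧
        ∀ y ∈ s, g y ∈ Metric.ball (u y) ((1 : ℝ) / (n + 1)) ∩ C := by
      intro x₀
      refine ⟨u ⁻¹' Metric.ball (u x₀) ((1 : ℝ) / (n + 1)),
        hu_cont.continuousAt.preimage_mem_nhds (Metric.ball_mem_nhds _ hr),
        fun _ => u x₀, contMDiffOn_const, fun y hy => ⟨?_, huC x₀⟩⟩
      rw [Metric.mem_ball, dist_comm]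
      exact hy
    obtain ⟨g, hg⟩ := exists_contMDiffMap_forall_mem_convex_of_local IB
      (t := fun x => Metric.ball (u x) ((1 : ℝ) / (n + 1)) ∩ C)
      (fun x => (convex_ball _ _).inter hCc) Hloc
    exact ⟨g, g.contMDiff, hg⟩
  choose h hhsm hhb using Hh
  -- the interpolated maps
  set v : ℕ → M → EN := fun n x => u x + χ x • (h n x - u x) with hv_def
  have hvC : ∀ n x, v n x ∈ C := by
    intro n x
    have h01 := hχ01 x
    have hcomb : (1 - χ x) • u x + χ x • h n x ∈ C :=
      hCc (huC x) (hhb n x).2 (by linarith [h01.2]) h01.1 (by ring)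
    have : v n x = (1 - χ x) • u x + χ x • h n x := by
      simp only [hv_def, smul_sub, sub_smul, one_smul]
      abel
    rwa [this]
  have hv_cont : ∀ n, Continuous (v n) := fun n =>
    hu_cont.add (χ.contMDiff.continuous.smul ((hhsm n).continuous.sub hu_cont))
  -- the candidate maps
  set G : ℕ → C(M, W) := fun n =>
    ⟨fun x => ⟨ψ (v n x), hψW _ (hvC n x)⟩,
      (hψ.continuousOn.comp_continuous (hv_cont n) fun x => hvC n x).subtype_mk _⟩
    with hG_def
  -- each `G n` agrees with `f` outside `U`
  have hGU : ∀ n, ∀ x, x ∉ U → G n x = f x := by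
    intro n x hx
    have hχx : χ x = 0 := hχ0 hx
    apply Subtype.ext
    show ψ (v n x) = (f x : N)
    have : v n x = u x := by simp [hv_def, hχx]
    rw [this]
    exact hψφ _ (f x).2
  -- each `G n` is smooth on `A ∪ O`
  have hLV : L ⊆ A ∪ O := by
    intro x hx
    by_cases hxA : x ∈ A
    · exact Or.inl hxA
    · exact Or.inr (hLAO ⟨hx, hxA⟩)
  have hGsm : ∀ n, ContMDiffOn IB IN (⊤ : ℕ∞) (fun x => (G n x : N)) (A ∪ O) := by
    intro n
    have hvA : ContMDiffOn IB 𝓘(ℝ, EN) (⊤ : ℕ∞) (v n) A :=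
      huA.add ((χ.contMDiff.contMDiffOn).smul (((hhsm n).contMDiffOn).sub huA))
    have hvO : ContMDiffOn IB 𝓘(ℝ, EN) (⊤ : ℕ∞) (v n) O := by
      refine ((hhsm n).contMDiffOn).congr fun x hx => ?_
      have hχx : χ x = 1 := hχ1 (subset_closure hx)
      simp only [hv_def, hχx, one_smul]
      abel
    have hvV : ContMDiffOn IB 𝓘(ℝ, EN) (⊤ : ℕ∞) (v n) (A ∪ O) := by
      apply contMDiffOn_of_locally_contMDiffOn
      rintro x (hx | hx)
      · exact ⟨A, hAo, hx, hvA.mono inter_subset_right⟩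
      · exact ⟨O, hOo, hx, hvO.mono inter_subset_right⟩
    exact hψ.comp hvV fun x _ => hvC n x
  -- `G n → f` in the compact-open topology
  have htendsto : Filter.Tendsto G Filter.atTop (nhds f) := by
    rw [ContinuousMap.tendsto_nhds_compactOpen]
    intro K hK V hV hfKV
    obtain ⟨V', hV', hVV'⟩ := isOpen_induced_iff.mp hV
    -- the relatively open set of points of `C` mapping into `V'`
    have hΩo : IsOpen (C ∩ ψ ⁻¹' V') :=
      hψ.continuousOn.isOpen_inter_preimage hCo hV'
    have himg : u '' K ⊆ C ∩ ψ ⁻¹' V' := by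
      rintro _ ⟨x, hxK, rfl⟩
      refine ⟨huC x, ?_⟩
      have hfx : f x ∈ V := hfKV hxK
      have : (f x : N) ∈ V' := by
        rw [← hVV'] at hfx
        exact hfx
      show ψ (u x) ∈ V'
      rw [hu_def]
      simp only
      rw [hψφ _ (f x).2]
      exact this
    obtain ⟨δ, hδ, hthick⟩ :=
      (hK.image hu_cont).exists_thickening_subset_open hΩo himg
    obtain ⟨n₀, hn₀⟩ := exists_nat_one_div_lt hδ
    rw [Filter.eventually_atTop]
    refine ⟨n₀, fun n hn x hxK => ?_⟩
    -- distance estimate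
    have hdist : dist (v n x) (u x) < δ := by
      have h1 : v n x - u x = χ x • (h n x - u x) := by
        simp [hv_def]
      have h2 : ‖χ x • (h n x - u x)‖ ≤ ‖h n x - u x‖ := by
        rw [norm_smul, Real.norm_eq_abs, abs_of_nonneg (hχ01 x).1]
        exact mul_le_of_le_one_left (norm_nonneg _) (hχ01 x).2
      have h3 : dist (h n x) (u x) < (1 : ℝ) / (n + 1) := (hhb n x).1
      have h4 : (1 : ℝ) / (n + 1) ≤ 1 / (n₀ + 1) := by
        apply one_div_le_one_div_of_le
        · positivity
        · exact_mod_cast Nat.succ_le_succ hn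
      calc dist (v n x) (u x) = ‖v n x - u x‖ := dist_eq_norm _ _
        _ = ‖χ x • (h n x - u x)‖ := by rw [h1]
        _ ≤ ‖h n x - u x‖ := h2
        _ = dist (h n x) (u x) := (dist_eq_norm _ _).symm
        _ < (1 : ℝ) / (n + 1) := h3
        _ ≤ (1 : ℝ) / (n₀ + 1) := h4
        _ < δ := hn₀
    have hmem : v n x ∈ C ∩ ψ ⁻¹' V' := by
      apply hthick
      rw [Metric.mem_thickening_iff]
      exact ⟨u x, mem_image_of_mem u hxK, hdist⟩
    show G n x ∈ V
    rw [← hVV']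
    exact hmem.2
  intro Nf hNf
  obtain ⟨n, hn⟩ := (htendsto.eventually_mem hNf).exists
  exact ⟨G n, hn, ⟨A ∪ O, hAo.union hOo, hLV, hGsm n⟩, hGU n⟩
end

section
/- Let π : E → M be a smooth fiber bundle with typical fibre N, let x₀ ∈ M, and let σ : M → E be a continuous section of π. Then there exist an open neighbourhood V of x₀ in M and a continuous homotopy G : [0,1] × M → E such that G(0,·) = σ, G(t,·) is a section of π for every t ∈ [0,1], G(t, x₀) = σ(x₀) for all t ∈ [0,1], and the section G(1,·) is, in a smooth local trivialisation around x₀, constantly equal to the fibre value of σ(x₀) on V; in particular σ is base-point-preservingly homotopic through sections to a section that is smooth on a neighbourhood of x₀. -/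
open Set Function
open scoped Manifold

/-- A surjective smooth map `proj : E → M` is a smooth fiber bundle with typical fibre `N`
if around every point of the base there is a smooth local trivialisation compatible with
`proj`. -/
def IsSmoothFiberBundle
    {EB : Type*} [NormedAddCommGroup EB] [NormedSpace ℝ EB]
    {HB : Type*} [TopologicalSpace HB] (IB : ModelWithCorners ℝ EB HB)
    {M : Type*} [TopologicalSpace M] [ChartedSpace HB M]
    {EN : Type*} [NormedAddCommGroup EN] [NormedSpace ℝ EN]
    {HN : Type*} [TopologicalSpace HN] (IN : ModelWithCorners ℝ EN HN)
    (N : Type*) [TopologicalSpace N] [ChartedSpace HN N]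
    {EE : Type*} [NormedAddCommGroup EE] [NormedSpace ℝ EE]
    {HE : Type*} [TopologicalSpace HE] (IE : ModelWithCorners ℝ EE HE)
    {E : Type*} [TopologicalSpace E] [ChartedSpace HE E]
    (proj : E → M) : Prop :=
  Surjective proj ∧ ContMDiff IE IB (⊤ : ℕ∞) proj ∧
    ∀ x : M, ∃ S : Set M, IsOpen S ∧ x ∈ S ∧
      ∃ (φ : E → M × N) (ψ : M × N → E),
        ContMDiffOn IE (IB.prod IN) (⊤ : ℕ∞) φ (proj ⁻¹' S) ∧
        ContMDiffOn (IB.prod IN) IE (⊤ : ℕ∞) ψ (S ×ˢ (univ : Set N)) ∧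
        (∀ e ∈ proj ⁻¹' S, (φ e).1 = proj e ∧ ψ (φ e) = e) ∧
        (∀ p ∈ S ×ˢ (univ : Set N), proj (ψ p) = p.1 ∧ φ (ψ p) = p)

/-- A continuous section is base-point-preservingly homotopic, through sections, to a
section that is constant (in a smooth local trivialisation around `x₀`) on a neighbourhood
`V` of `x₀`, with fibre value that of `σ x₀`. -/
theorem continuous_section_homotopic_to_locally_constant_section
    {EB : Type*} [NormedAddCommGroup EB] [NormedSpace ℝ EB] [FiniteDimensional ℝ EB]
    {HB : Type*} [TopologicalSpace HB] {IB : ModelWithCorners ℝ EB HB}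
    {M : Type*} [TopologicalSpace M] [ChartedSpace HB M] [IsManifold IB (⊤ : ℕ∞) M]
    [ConnectedSpace M] [SecondCountableTopology M] [T2Space M]
    {EN : Type*} [NormedAddCommGroup EN] [NormedSpace ℝ EN]
    {HN : Type*} [TopologicalSpace HN] {IN : ModelWithCorners ℝ EN HN}
    {N : Type*} [TopologicalSpace N] [ChartedSpace HN N] [IsManifold IN (⊤ : ℕ∞) N]
    {EE : Type*} [NormedAddCommGroup EE] [NormedSpace ℝ EE]
    {HE : Type*} [TopologicalSpace HE] {IE : ModelWithCorners ℝ EE HE}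
    {E : Type*} [TopologicalSpace E] [ChartedSpace HE E] [IsManifold IE (⊤ : ℕ∞) E]
    (proj : E → M) (hbundle : IsSmoothFiberBundle IB IN N IE proj)
    (x₀ : M)
    (σ : M → E) (hσc : Continuous σ) (hσs : ∀ x, proj (σ x) = x) :
    ∃ (S : Set M) (φ : E → M × N) (ψ : M × N → E), IsOpen S ∧ x₀ ∈ S ∧
      ContMDiffOn IE (IB.prod IN) (⊤ : ℕ∞) φ (proj ⁻¹' S) ∧
      ContMDiffOn (IB.prod IN) IE (⊤ : ℕ∞) ψ (S ×ˢ (univ : Set N)) ∧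
      (∀ e ∈ proj ⁻¹' S, (φ e).1 = proj e ∧ ψ (φ e) = e) ∧
      (∀ p ∈ S ×ˢ (univ : Set N), proj (ψ p) = p.1 ∧ φ (ψ p) = p) ∧
      ∃ V : Set M, IsOpen V ∧ x₀ ∈ V ∧ V ⊆ S ∧
        ∃ G : Set.Icc (0:ℝ) 1 × M → E, Continuous G ∧
          (∀ x, G ((⟨0, left_mem_Icc.mpr zero_le_one⟩ : Set.Icc (0:ℝ) 1), x) = σ x) ∧
          (∀ t x, proj (G (t, x)) = x) ∧
          (∀ t, G (t, x₀) = σ x₀) ∧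
          (∀ x ∈ V, G ((⟨1, right_mem_Icc.mpr zero_le_one⟩ : Set.Icc (0:ℝ) 1), x) = ψ (x, (φ (σ x₀)).2)) := by
  classical
  obtain ⟨-, -, htriv⟩ := hbundle
  obtain ⟨S₀, hS₀, hx₀, φ, ψ, hφ, hψ, hφψ, hψφ⟩ := htriv x₀
  -- chart setup
  set c := chartAt HB x₀ with hc
  set e : M → EB := fun x => IB (c x) with he
  set y₀ : EB := e x₀ with hy₀
  set T : Set M := S₀ ∩ c.source with hT
  have hTopen : IsOpen T := hS₀.inter c.open_source
  have hx₀T : x₀ ∈ T := ⟨hx₀, mem_chart_source HB x₀⟩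
  have hcT : IsOpen (c '' T) := c.isOpen_image_of_subset_source hTopen inter_subset_right
  set Z : Set EB := IB.symm ⁻¹' (c '' T) with hZ
  have hZopen : IsOpen Z := hcT.preimage IB.continuous_symm
  have hy₀Z : y₀ ∈ Z := by
    simp only [hZ, mem_preimage, hy₀, he, ModelWithCorners.left_inv]
    exact mem_image_of_mem c hx₀T
  set q : EB → M := fun y => c.symm (IB.symm y) with hq
  have hqT : ∀ y ∈ Z, q y ∈ T := by
    intro y hy
    obtain ⟨m, hmT, hmy⟩ := hy
    have : q y = m := by rw [hq]; simp only [← hmy]; exact c.left_inv hmT.2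
    rwa [this]
  have hqe : ∀ y ∈ Z, y ∈ range IB → e (q y) = y := by
    intro y hy hyr
    obtain ⟨m, hmT, hmy⟩ := hy
    have h1 : q y = m := by rw [hq]; simp only [← hmy]; exact c.left_inv hmT.2
    rw [h1, he]
    simp only [hmy]
    exact IB.right_inv hyr
  have hqex : ∀ x ∈ c.source, q (e x) = x := by
    intro x hx
    rw [hq, he]
    simp only [ModelWithCorners.left_inv]
    exact c.left_inv hx
  have hqcont : ContinuousOn q Z := by
    apply c.continuousOn_symm.comp IB.continuous_symm.continuousOn
    intro y hy
    obtain ⟨m, hmT, hmy⟩ := hy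
    rw [← hmy]; exact c.map_source hmT.2
  -- choose ε
  obtain ⟨ε₃, hε₃pos, hball⟩ := Metric.isOpen_iff.mp hZopen y₀ hy₀Z
  set ε : ℝ := ε₃ / 3 with hε
  have hεpos : 0 < ε := by positivity
  have hball3 : Metric.ball y₀ (3 * ε) ⊆ Z := by
    rw [hε]; rw [show 3 * (ε₃ / 3) = ε₃ by ring]; exact hball
  -- continuity of e on c.source
  have hecont : ContinuousOn e c.source := IB.continuous.comp_continuousOn c.continuousOn
  -- the sets
  set T' : Set M := S₀ ∩ (c.source ∩ e ⁻¹' Metric.ball y₀ (3 * ε)) with hT'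
  set V : Set M := S₀ ∩ (c.source ∩ e ⁻¹' Metric.ball y₀ ε) with hV
  have hT'open : IsOpen T' :=
    hS₀.inter (hecont.isOpen_inter_preimage c.open_source Metric.isOpen_ball)
  have hVopen : IsOpen V :=
    hS₀.inter (hecont.isOpen_inter_preimage c.open_source Metric.isOpen_ball)
  have hx₀T' : x₀ ∈ T' := by
    refine ⟨hx₀, mem_chart_source HB x₀, ?_⟩
    simp only [mem_preimage, ← hy₀, Metric.mem_ball, dist_self]
    positivity
  have hx₀V : x₀ ∈ V := by
    refine ⟨hx₀, mem_chart_source HB x₀, ?_⟩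
    simp only [mem_preimage, ← hy₀, Metric.mem_ball, dist_self]
    exact hεpos
  have hVT' : V ⊆ T' := by
    intro x hx
    refine ⟨hx.1, hx.2.1, ?_⟩
    have := hx.2.2
    simp only [mem_preimage, Metric.mem_ball] at this ⊢
    nlinarith
  -- compact set D for gluing
  set K : Set EB := Metric.closedBall y₀ (2 * ε) ∩ range IB with hK
  have hKZ : K ⊆ Z := by
    intro y hy
    apply hball3
    have := hy.1
    simp only [Metric.mem_closedBall] at this
    simp only [Metric.mem_ball]
    linarith
  have hKcompact : IsCompact K :=
    (isCompact_closedBall y₀ (2 * ε)).inter_right IB.isClosed_range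
  set D : Set M := q '' K with hD
  have hDcompact : IsCompact D := hKcompact.image_of_continuousOn (hqcont.mono hKZ)
  have hDclosed : IsClosed D := hDcompact.isClosed
  have hDT' : D ⊆ T' := by
    rintro x ⟨y, hyK, rfl⟩
    have hyZ := hKZ hyK
    have h1 := hqT y hyZ
    have h2 := hqe y hyZ hyK.2
    refine ⟨h1.1, h1.2, ?_⟩
    simp only [mem_preimage, Metric.mem_ball, h2]
    have := hyK.1
    simp only [Metric.mem_closedBall] at this
    linarith
  have hDmem : ∀ x ∈ T', dist (e x) y₀ ≤ 2 * ε → x ∈ D := by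
    intro x hx hd
    refine ⟨e x, ⟨Metric.mem_closedBall.mpr hd, mem_range_self _⟩, hqex x hx.2.1⟩
  -- the fibre coordinate of σ
  set f : M → N := fun m => (φ (σ m)).2 with hf
  have hσmem : ∀ x ∈ S₀, σ x ∈ proj ⁻¹' S₀ := by
    intro x hx; simp only [mem_preimage, hσs]; exact hx
  have hfcont : ContinuousOn f S₀ := by
    apply continuous_snd.comp_continuousOn
    exact hφ.continuousOn.comp hσc.continuousOn hσmem
  have hψcont : ContinuousOn ψ (S₀ ×ˢ (univ : Set N)) := hψ.continuousOn
  -- cutoff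
  set χ : ℝ → ℝ := fun d => min 1 (max ((2 * ε - d) / ε) 0) with hχ
  have hχcont : Continuous χ := by
    apply Continuous.min continuous_const
    exact Continuous.max ((continuous_const.sub continuous_id).div_const ε) continuous_const
  have hχ01 : ∀ d, 0 ≤ χ d ∧ χ d ≤ 1 := fun d =>
    ⟨le_min zero_le_one (le_max_right _ _), min_le_left _ _⟩
  have hχ0 : ∀ d, 2 * ε ≤ d → χ d = 0 := by
    intro d hd
    have h1 : (2 * ε - d) / ε ≤ 0 := div_nonpos_of_nonpos_of_nonneg (by linarith) hεpos.le
    rw [hχ]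
    simp only [max_eq_right h1, min_eq_right zero_le_one]
  have hχ1 : ∀ d, d < ε → χ d = 1 := by
    intro d hd
    have h1 : (1:ℝ) ≤ (2 * ε - d) / ε := (le_div_iff₀ hεpos).mpr (by linarith)
    have h2 : (1:ℝ) ≤ max ((2 * ε - d) / ε) 0 := h1.trans (le_max_left _ _)
    simp only [hχ, min_eq_left h2]
  -- the scalar and interpolation
  set a : Set.Icc (0:ℝ) 1 × M → ℝ := fun p => p.1.1 * χ (dist (e p.2) y₀) with ha
  have ha01 : ∀ p, 0 ≤ a p ∧ a p ≤ 1 := by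
    intro p
    constructor
    · exact mul_nonneg p.1.2.1 (hχ01 _).1
    · exact mul_le_one₀ p.1.2.2 (hχ01 _).1 (hχ01 _).2
  set L : Set.Icc (0:ℝ) 1 × M → EB := fun p => e p.2 + a p • (y₀ - e p.2) with hL
  have hLdist : ∀ p, dist (L p) y₀ ≤ dist (e p.2) y₀ := by
    intro p
    have h1 : L p - y₀ = (1 - a p) • (e p.2 - y₀) := by
      rw [hL]; simp only [sub_smul, smul_sub, one_smul]; abel
    rw [dist_eq_norm, h1, norm_smul]
    rw [dist_eq_norm]
    have h2 : ‖(1 : ℝ) - a p‖ ≤ 1 := by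
      rw [Real.norm_eq_abs, abs_le]
      constructor <;> [linarith [(ha01 p).2]; linarith [(ha01 p).1]]
    calc ‖1 - a p‖ * ‖e p.2 - y₀‖ ≤ 1 * ‖e p.2 - y₀‖ :=
          mul_le_mul_of_nonneg_right h2 (norm_nonneg _)
      _ = ‖e p.2 - y₀‖ := one_mul _
  have hLball : ∀ p : Set.Icc (0:ℝ) 1 × M, p.2 ∈ T' → L p ∈ Metric.ball y₀ (3 * ε) := by
    intro p hp
    have h1 := hp.2.2
    simp only [mem_preimage, Metric.mem_ball] at h1 ⊢
    exact lt_of_le_of_lt (hLdist p) h1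
  have hLa0 : ∀ p : Set.Icc (0:ℝ) 1 × M, a p = 0 → L p = e p.2 := by
    intro p hp
    rw [hL]; simp only [hp, zero_smul, add_zero]
  have hLa1 : ∀ p : Set.Icc (0:ℝ) 1 × M, a p = 1 → L p = y₀ := by
    intro p hp
    rw [hL]; simp only [hp, one_smul]; abel
  -- the candidate homotopy on the chart region
  set F : Set.Icc (0:ℝ) 1 × M → E := fun p => ψ (p.2, f (q (L p))) with hF
  -- F agrees with σ when a = 0
  have hσfull : ∀ x ∈ S₀, ψ (x, f x) = σ x := by
    intro x hx
    have h1 := hφψ (σ x) (hσmem x hx)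
    have h2 : φ (σ x) = (x, f x) := by
      rw [hf]
      exact Prod.ext (by rw [h1.1, hσs]) rfl
    rw [← h2, h1.2]
  have hFσ : ∀ p : Set.Icc (0:ℝ) 1 × M, p.2 ∈ T' → a p = 0 → F p = σ p.2 := by
    intro p hp hap
    rw [hF]
    simp only [hLa0 p hap, hqex p.2 hp.2.1]
    exact hσfull p.2 hp.1
  -- F is continuous on the chart region
  have hFcont : ContinuousOn F (Prod.snd ⁻¹' T' : Set (Set.Icc (0:ℝ) 1 × M)) := by
    have hecont' : ContinuousOn (fun p : Set.Icc (0:ℝ) 1 × M => e p.2)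
        (Prod.snd ⁻¹' T') := by
      apply hecont.comp continuous_snd.continuousOn
      intro p hp; exact hp.2.1
    have hacont : ContinuousOn a (Prod.snd ⁻¹' T' : Set (Set.Icc (0:ℝ) 1 × M)) := by
      apply ContinuousOn.mul
      · exact (continuous_subtype_val.comp continuous_fst).continuousOn
      · exact (hχcont.comp_continuousOn ((continuous_id.dist continuous_const).comp_continuousOn hecont'))
    have hLcont : ContinuousOn L (Prod.snd ⁻¹' T' : Set (Set.Icc (0:ℝ) 1 × M)) := by
      apply hecont'.add
      exact hacont.smul (continuousOn_const.sub hecont')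
    have hqLcont : ContinuousOn (fun p => q (L p))
        (Prod.snd ⁻¹' T' : Set (Set.Icc (0:ℝ) 1 × M)) := by
      apply hqcont.comp hLcont
      intro p hp
      exact hball3 (hLball p hp)
    have hfqLcont : ContinuousOn (fun p => f (q (L p)))
        (Prod.snd ⁻¹' T' : Set (Set.Icc (0:ℝ) 1 × M)) := by
      apply hfcont.comp hqLcont
      intro p hp
      exact (hqT _ (hball3 (hLball p hp))).1
    apply hψcont.comp (ContinuousOn.prodMk continuous_snd.continuousOn hfqLcont)
    intro p hp
    exact ⟨hp.1, mem_univ _⟩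
  -- the glued homotopy
  set G : Set.Icc (0:ℝ) 1 × M → E := fun p => if p.2 ∈ T' then F p else σ p.2 with hG
  -- G = σ ∘ snd outside D
  have hGσ : ∀ p : Set.Icc (0:ℝ) 1 × M, p.2 ∉ D → G p = σ p.2 := by
    intro p hp
    rw [hG]
    by_cases hpT : p.2 ∈ T'
    · simp only [if_pos hpT]
      apply hFσ p hpT
      have hd : 2 * ε < dist (e p.2) y₀ := by
        by_contra h
        exact hp (hDmem p.2 hpT (not_lt.mp h))
      simp only [ha]
      rw [hχ0 _ hd.le, mul_zero]
    · simp only [if_neg hpT]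
  have hGcont : Continuous G := by
    rw [continuous_iff_continuousAt]
    intro p
    by_cases hpT : p.2 ∈ T'
    · have hmem : (Prod.snd ⁻¹' T' : Set (Set.Icc (0:ℝ) 1 × M)) ∈ nhds p :=
        (hT'open.preimage continuous_snd).mem_nhds hpT
      apply (hFcont.continuousAt hmem).congr
      filter_upwards [hmem] with r hr
      rw [hG]
      exact (if_pos (hr : r.2 ∈ T')).symm
    · have hpD : p.2 ∉ D := fun h => hpT (hDT' h)
      have hmem : (Prod.snd ⁻¹' Dᶜ : Set (Set.Icc (0:ℝ) 1 × M)) ∈ nhds p :=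
        (hDclosed.isOpen_compl.preimage continuous_snd).mem_nhds hpD
      apply ContinuousAt.congr ((hσc.comp continuous_snd).continuousAt)
      filter_upwards [hmem] with r hr
      exact (hGσ r hr).symm
  -- assemble
  refine ⟨S₀, φ, ψ, hS₀, hx₀, hφ, hψ, hφψ, hψφ, V, hVopen, hx₀V, inter_subset_left,
    G, hGcont, ?_, ?_, ?_, ?_⟩
  · -- G 0 x = σ x
    intro x
    by_cases hx : x ∈ T'
    · rw [hG]
      simp only [if_pos hx]
      apply hFσ _ hx
      rw [ha]
      simp only [zero_mul]
    · rw [hG]; simp only [if_neg hx]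
  · -- proj (G (t,x)) = x
    intro t x
    by_cases hx : x ∈ T'
    · rw [hG]
      simp only [if_pos hx, hF]
      exact (hψφ (x, f (q (L (t, x)))) ⟨hx.1, mem_univ _⟩).1
    · rw [hG]; simp only [if_neg hx]; exact hσs x
  · -- G (t, x₀) = σ x₀
    intro t
    rw [hG]
    simp only [if_pos hx₀T', hF]
    have h1 : L (t, x₀) = y₀ := by
      rw [hL]
      show e x₀ + a (t, x₀) • (y₀ - e x₀) = y₀
      rw [← hy₀]
      simp only [sub_self, smul_zero, add_zero]
    have h2 : q y₀ = x₀ := hqex x₀ (mem_chart_source HB x₀)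
    rw [show L (t, x₀) = y₀ from h1, h2]
    exact hσfull x₀ hx₀
  · -- G 1 x = ψ (x, f x₀) on V
    intro x hx
    rw [hG]
    simp only [if_pos (hVT' hx), hF]
    have hax : a (⟨1, right_mem_Icc.mpr zero_le_one⟩, x) = 1 := by
      rw [ha]
      show (1:ℝ) * χ (dist (e x) y₀) = 1
      rw [hχ1 _ (Metric.mem_ball.mp hx.2.2), mul_one]
    have h1 : L (⟨1, right_mem_Icc.mpr zero_le_one⟩, x) = y₀ := hLa1 _ hax
    have h2 : q y₀ = x₀ := hqex x₀ (mem_chart_source HB x₀)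
    rw [show L (⟨1, right_mem_Icc.mpr zero_le_one⟩, x) = y₀ from h1, h2]
end
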